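/- Fix α ∈ ℝ. Let F = ℝ[q_2, q_4, q_6, …] be the polynomial algebra in countably many variables q_{2k} (k ≥ 1), with the convention q_0 = 1, graded by assigning q_{2k} degree 2k+1. Let A : F → F be the linear operator A = Σ_{i,j≥1} (2i+1)(2j+1)(q_{2i+2j} − q_{2i} q_{2j}) ∂²/∂q_{2i}∂q_{2j} + 2 Σ_{i,j≥0} (2i+2j+3) q_{2i} q_{2j} ∂/∂q_{2i+2j+2} − Σ_{i≥1} (2i+1)(2i + α/2) q_{2i} ∂/∂q_{2i}; applied to any polynomial only finitely many of the summands are nonzero, so A is a well-defined linear operator on F. Then for every integer m ≥ 0 and every polynomial f ∈ F that is homogeneous of degree m with respect to the grading deg q_{2k} = 2k+1, the polynomial A f + m(m − 1 + α/2) f has degree at most m−1. In particular, on the m-th graded component A acts as multiplication by −m(m−1+α/2) modulo terms of lower degree. -/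

import Mathlib

open Finset MvPolynomial

/-- The algebra `F = ℝ[q_2, q_4, q_6, …]` is realized as `MvPolynomial ℕ ℝ`, the
variable `k` standing for `q_{2k+2}` (so the variables are `q_2, q_4, …`). The grading
assigns `q_{2k+2}` the degree `2k+3`. -/
noncomputable abbrev Falg : Type := MvPolynomial ℕ ℝ

/-- `q_{2i}` for `i ≥ 0`, with the convention `q_0 = 1`. -/
noncomputable def Q (i : ℕ) : Falg := if i = 0 then 1 else MvPolynomial.X (i - 1)

/-- The pre-generator
`A = ∑_{i,j≥1} (2i+1)(2j+1)(q_{2i+2j} − q_{2i}q_{2j}) ∂²/∂q_{2i}∂q_{2j}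
  + 2 ∑_{i,j≥0} (2i+2j+3) q_{2i} q_{2j} ∂/∂q_{2i+2j+2}
  − ∑_{i≥1} (2i+1)(2i+α/2) q_{2i} ∂/∂q_{2i}` (with `q_0 = 1`),
as a well-defined linear operator on `F`: applied to a polynomial `f`, only finitely
many summands are nonzero (all others involve a partial derivative of `f` in a variable
not occurring in `f`), so the infinite sums may be truncated to the finite sums below
without changing the value.  In the chosen indexing, `q_{2i} = X (i−1)` for `i ≥ 1` and
`∂/∂q_{2i}` is `pderiv (i−1)`. -/
noncomputable def Aop (α : ℝ) (f : Falg) : Falg :=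
  (∑ a ∈ f.vars, ∑ b ∈ f.vars,
      (((2 * a + 3) * (2 * b + 3) : ℕ) : ℝ) •
        ((MvPolynomial.X (a + b + 1) - MvPolynomial.X a * MvPolynomial.X b) *
          MvPolynomial.pderiv a (MvPolynomial.pderiv b f))) +
  (∑ i ∈ Finset.range (f.vars.sup id + 1), ∑ j ∈ Finset.range (f.vars.sup id + 1),
      ((2 * (2 * (i : ℝ) + 2 * (j : ℝ) + 3)) : ℝ) •
        (Q i * Q j * MvPolynomial.pderiv (i + j) f)) -
  ∑ a ∈ f.vars,
      ((2 * (a : ℝ) + 3) * ((2 * (a : ℝ) + 2) + α / 2)) •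
        (MvPolynomial.X a * MvPolynomial.pderiv a f)

/-! ### Auxiliary lemmas -/

lemma mem_support_pderiv' {f : MvPolynomial ℕ ℝ} {a : ℕ} {e : ℕ →₀ ℕ}
    (he : e ∈ (MvPolynomial.pderiv a f).support) : e + Finsupp.single a 1 ∈ f.support := by
  classical
  have hrepr : MvPolynomial.pderiv a f
      = ∑ s ∈ f.support, MvPolynomial.pderiv a (monomial s (coeff s f)) := by
    conv_lhs => rw [MvPolynomial.as_sum f]
    rw [map_sum]
  rw [hrepr] at he
  obtain ⟨s, hs, hes⟩ := Finset.mem_biUnion.mp (MvPolynomial.support_sum he)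
  rw [pderiv_monomial, MvPolynomial.support_monomial] at hes
  by_cases hz : coeff s f * s a = 0
  · simp [hz] at hes
  · simp only [hz, if_false] at hes
    have hsa : 1 ≤ s a := by
      rcases Nat.eq_zero_or_pos (s a) with h0 | h1
      · simp [h0] at hz
      · exact h1
    have : e = s - Finsupp.single a 1 := Finset.mem_singleton.mp hes
    rw [this, tsub_add_cancel_of_le (Finsupp.single_le_iff.mpr hsa)]
    exact hs

lemma weight_single' (a n : ℕ) :
    Finsupp.weight (fun k : ℕ => 2 * k + 3) (Finsupp.single a n) = n * (2 * a + 3) := by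
  simp [Finsupp.weight_apply, Finsupp.sum_single_index]

lemma weight_pderiv' {f : MvPolynomial ℕ ℝ} {m : ℕ}
    (hf : MvPolynomial.IsWeightedHomogeneous (fun k => 2 * k + 3) f m) (a : ℕ) :
    ∀ e ∈ (MvPolynomial.pderiv a f).support,
      Finsupp.weight (fun k : ℕ => 2 * k + 3) e + (2 * a + 3) = m := by
  intro e he
  have h1 := mem_support_pderiv' he
  have h2 : Finsupp.weight (fun k : ℕ => 2 * k + 3) (e + Finsupp.single a 1) = m :=
    hf (MvPolynomial.mem_support_iff.mp h1)
  rw [map_add, weight_single', one_mul] at h2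
  exact h2

lemma support_Q_mul' {i : ℕ} {g : Falg} {d : ℕ →₀ ℕ} (hd : d ∈ (Q i * g).support) :
    ∃ e ∈ g.support, (Finsupp.weight (fun k : ℕ => 2 * k + 3) d : ℕ)
      ≤ Finsupp.weight (fun k : ℕ => 2 * k + 3) e + (2 * i + 1) := by
  rcases Nat.eq_zero_or_pos i with h0 | h1
  · refine ⟨d, ?_, by omega⟩
    simpa [Q, h0] using hd
  · have : Q i = MvPolynomial.X (i - 1) := by simp [Q, Nat.pos_iff_ne_zero.mp h1]
    rw [this, MvPolynomial.support_X_mul] at hd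
    obtain ⟨e, he, rfl⟩ := Finset.mem_map.mp hd
    refine ⟨e, he, ?_⟩
    simp only [addLeftEmbedding_apply, map_add]
    have : Finsupp.weight (fun k : ℕ => 2 * k + 3) (Finsupp.single (i - 1) 1)
        = 2 * (i - 1) + 3 := by
      simp [Finsupp.weight_apply, Finsupp.sum_single_index]
    rw [this]
    omega

lemma X_mul_pderiv_monomial (a : ℕ) (s : ℕ →₀ ℕ) (c : ℝ) :
    MvPolynomial.X a * MvPolynomial.pderiv a (monomial s c)
      = ((s a : ℕ) : ℝ) • monomial s c := by
  rw [pderiv_monomial, MvPolynomial.smul_monomial]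
  rcases Nat.eq_zero_or_pos (s a) with h0 | h1
  · simp [h0]
  · rw [MvPolynomial.X, MvPolynomial.monomial_mul,
      add_comm, tsub_add_cancel_of_le (Finsupp.single_le_iff.mpr h1)]
    rw [one_mul, smul_eq_mul, mul_comm]

lemma XX_mul_pderiv2_monomial (a b : ℕ) (s : ℕ →₀ ℕ) (c : ℝ) :
    (MvPolynomial.X a * MvPolynomial.X b) *
        MvPolynomial.pderiv a (MvPolynomial.pderiv b (monomial s c))
      = (((s b * ((s - Finsupp.single b 1 : ℕ →₀ ℕ) a) : ℕ)) : ℝ) • monomial s c := by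
  rw [pderiv_monomial, pderiv_monomial, MvPolynomial.smul_monomial]
  rcases Nat.eq_zero_or_pos (s b) with h0 | h1
  · simp [h0]
  rcases Nat.eq_zero_or_pos ((s - Finsupp.single b 1 : ℕ →₀ ℕ) a) with g0 | g1
  · simp [g0]
  rw [MvPolynomial.X, MvPolynomial.X, MvPolynomial.monomial_mul, MvPolynomial.monomial_mul]
  have e1 : Finsupp.single a 1 + Finsupp.single b 1 + (s - Finsupp.single b 1 - Finsupp.single a 1)
      = s := by
    rw [add_comm (Finsupp.single a 1), add_assoc,
      add_tsub_cancel_of_le (Finsupp.single_le_iff.mpr g1),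
      add_tsub_cancel_of_le (Finsupp.single_le_iff.mpr h1)]
  rw [e1, one_mul, one_mul, smul_eq_mul]
  push_cast
  ring_nf

lemma sum_weight_eq {S : Finset ℕ} {t : ℕ →₀ ℕ} (ht : t.support ⊆ S) :
    ∑ a ∈ S, (2 * (a : ℝ) + 3) * (t a : ℝ)
      = ((Finsupp.weight (fun k : ℕ => 2 * k + 3) t : ℕ) : ℝ) := by
  classical
  rw [Finsupp.weight_apply, Finsupp.sum]
  rw [← Finset.sum_subset ht (fun x _ hx => by
    simp [Finsupp.notMem_support_iff.mp hx])]
  rw [Nat.cast_sum]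
  exact Finset.sum_congr rfl (fun a _ => by push_cast [smul_eq_mul]; ring)

lemma coeff_sum_identity (α : ℝ) (m : ℕ) (S : Finset ℕ) (s : ℕ →₀ ℕ) (hsS : s.support ⊆ S)
    (hw : Finsupp.weight (fun k : ℕ => 2 * k + 3) s = m) :
    (∑ a ∈ S, ∑ b ∈ S, ((((2 * a + 3) * (2 * b + 3) : ℕ)) : ℝ) *
        (((s b * ((s - Finsupp.single b 1 : ℕ →₀ ℕ) a) : ℕ)) : ℝ))
      + ∑ a ∈ S, ((2 * (a : ℝ) + 3) * ((2 * (a : ℝ) + 2) + α / 2)) * (s a : ℝ)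
      = (m : ℝ) * ((m : ℝ) - 1 + α / 2) := by
  classical
  have hm : ∑ a ∈ S, (2 * (a : ℝ) + 3) * (s a : ℝ) = (m : ℝ) := by
    rw [sum_weight_eq hsS, hw]
  have key : ∀ b ∈ S,
      ∑ a ∈ S, ((((2 * a + 3) * (2 * b + 3) : ℕ)) : ℝ) *
          (((s b * ((s - Finsupp.single b 1 : ℕ →₀ ℕ) a) : ℕ)) : ℝ)
        = (2 * (b : ℝ) + 3) * (s b : ℝ) * ((m : ℝ) - (2 * (b : ℝ) + 3)) := by
    intro b _
    rcases Nat.eq_zero_or_pos (s b) with h0 | h1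
    · simp [h0]
    · have hWsub : Finsupp.weight (fun k : ℕ => 2 * k + 3) (s - Finsupp.single b 1)
          + (2 * b + 3) = m := by
        have e : (s - Finsupp.single b 1) + Finsupp.single b 1 = s :=
          tsub_add_cancel_of_le (Finsupp.single_le_iff.mpr h1)
        calc Finsupp.weight (fun k : ℕ => 2 * k + 3) (s - Finsupp.single b 1) + (2 * b + 3)
            = Finsupp.weight (fun k : ℕ => 2 * k + 3)
                ((s - Finsupp.single b 1) + Finsupp.single b 1) := by
              rw [map_add, weight_single', one_mul]
          _ = m := by rw [e, hw]
      have hsub : ((Finsupp.weight (fun k : ℕ => 2 * k + 3) (s - Finsupp.single b 1) : ℕ) : ℝ)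
          = (m : ℝ) - (2 * (b : ℝ) + 3) := by
        have := congrArg (fun n : ℕ => (n : ℝ)) hWsub
        push_cast at this
        linarith
      have hws := sum_weight_eq (S := S) (t := s - Finsupp.single b 1)
        (Finsupp.support_tsub.trans hsS)
      rw [hsub] at hws
      calc ∑ a ∈ S, ((((2 * a + 3) * (2 * b + 3) : ℕ)) : ℝ) *
              (((s b * ((s - Finsupp.single b 1 : ℕ →₀ ℕ) a) : ℕ)) : ℝ)
          = (2 * (b : ℝ) + 3) * (s b : ℝ) *
              (∑ a ∈ S, (2 * (a : ℝ) + 3) * (((s - Finsupp.single b 1 : ℕ →₀ ℕ) a : ℕ) : ℝ)) := by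
            rw [Finset.mul_sum]
            exact Finset.sum_congr rfl (fun a _ => by push_cast; ring)
        _ = _ := by rw [hws]
  rw [Finset.sum_comm, ← Finset.sum_add_distrib]
  have h2 : ∀ b ∈ S,
      (∑ a ∈ S, ((((2 * a + 3) * (2 * b + 3) : ℕ)) : ℝ) *
          (((s b * ((s - Finsupp.single b 1 : ℕ →₀ ℕ) a) : ℕ)) : ℝ))
        + ((2 * (b : ℝ) + 3) * ((2 * (b : ℝ) + 2) + α / 2)) * (s b : ℝ)
      = ((2 * (b : ℝ) + 3) * (s b : ℝ)) * ((m : ℝ) - 1 + α / 2) := by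
    intro b hb
    rw [key b hb]
    ring
  rw [Finset.sum_congr rfl h2, ← Finset.sum_mul, hm]

lemma main_identity (α : ℝ) (m : ℕ) (f : Falg)
    (hf : MvPolynomial.IsWeightedHomogeneous (fun k => 2 * k + 3) f m) :
    (∑ a ∈ f.vars, ∑ b ∈ f.vars, (((2 * a + 3) * (2 * b + 3) : ℕ) : ℝ) •
        ((MvPolynomial.X a * MvPolynomial.X b) *
          MvPolynomial.pderiv a (MvPolynomial.pderiv b f)))
      + ∑ a ∈ f.vars, ((2 * (a : ℝ) + 3) * ((2 * (a : ℝ) + 2) + α / 2)) •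
          (MvPolynomial.X a * MvPolynomial.pderiv a f)
      = ((m : ℝ) * ((m : ℝ) - 1 + α / 2)) • f := by
  classical
  set S := f.vars with hS
  have mono : ∀ s ∈ f.support,
      (∑ a ∈ S, ∑ b ∈ S, (((2 * a + 3) * (2 * b + 3) : ℕ) : ℝ) •
          ((MvPolynomial.X a * MvPolynomial.X b) *
            MvPolynomial.pderiv a (MvPolynomial.pderiv b (monomial s (coeff s f)))))
        + ∑ a ∈ S, ((2 * (a : ℝ) + 3) * ((2 * (a : ℝ) + 2) + α / 2)) •
            (MvPolynomial.X a * MvPolynomial.pderiv a (monomial s (coeff s f)))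
      = ((m : ℝ) * ((m : ℝ) - 1 + α / 2)) • monomial s (coeff s f) := by
    intro s hs
    have hsS : s.support ⊆ S := fun a ha =>
      (MvPolynomial.mem_vars a).mpr ⟨s, hs, ha⟩
    have hw : Finsupp.weight (fun k : ℕ => 2 * k + 3) s = m :=
      hf (MvPolynomial.mem_support_iff.mp hs)
    simp only [XX_mul_pderiv2_monomial, X_mul_pderiv_monomial, smul_smul]
    rw [← Finset.sum_smul]
    simp_rw [← Finset.sum_smul]
    rw [← add_smul, coeff_sum_identity α m S s hsS hw]
  have hA : (∑ a ∈ S, ∑ b ∈ S, (((2 * a + 3) * (2 * b + 3) : ℕ) : ℝ) •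
        ((MvPolynomial.X a * MvPolynomial.X b) *
          MvPolynomial.pderiv a (MvPolynomial.pderiv b f)))
      = ∑ s ∈ f.support, ∑ a ∈ S, ∑ b ∈ S, (((2 * a + 3) * (2 * b + 3) : ℕ) : ℝ) •
          ((MvPolynomial.X a * MvPolynomial.X b) *
            MvPolynomial.pderiv a (MvPolynomial.pderiv b (monomial s (coeff s f)))) := by
    have hD : ∀ a b : ℕ, (MvPolynomial.X a * MvPolynomial.X b) *
          MvPolynomial.pderiv a (MvPolynomial.pderiv b f)
        = ∑ s ∈ f.support, (MvPolynomial.X a * MvPolynomial.X b) *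
            MvPolynomial.pderiv a (MvPolynomial.pderiv b (monomial s (coeff s f))) := by
      intro a b
      conv_lhs => rw [MvPolynomial.as_sum f]
      simp only [map_sum, Finset.mul_sum]
    simp only [hD, Finset.smul_sum]
    exact (Finset.sum_congr rfl fun a _ => Finset.sum_comm).trans Finset.sum_comm
  have hB : (∑ a ∈ S, ((2 * (a : ℝ) + 3) * ((2 * (a : ℝ) + 2) + α / 2)) •
        (MvPolynomial.X a * MvPolynomial.pderiv a f))
      = ∑ s ∈ f.support, ∑ a ∈ S, ((2 * (a : ℝ) + 3) * ((2 * (a : ℝ) + 2) + α / 2)) •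
          (MvPolynomial.X a * MvPolynomial.pderiv a (monomial s (coeff s f))) := by
    have hD : ∀ a : ℕ, MvPolynomial.X a * MvPolynomial.pderiv a f
        = ∑ s ∈ f.support, MvPolynomial.X a *
            MvPolynomial.pderiv a (monomial s (coeff s f)) := by
      intro a
      conv_lhs => rw [MvPolynomial.as_sum f]
      simp only [map_sum, Finset.mul_sum]
    simp only [hD, Finset.smul_sum]
    exact Finset.sum_comm
  rw [hA, hB, ← Finset.sum_add_distrib, Finset.sum_congr rfl mono, ← Finset.smul_sum,
    ← MvPolynomial.as_sum]

/-- **The pre-generator `A` acts on the `m`-th graded component as multiplication by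
`−m(m−1+α/2)` modulo lower degree terms:** for every `f ∈ F` homogeneous of degree `m`
(with respect to the grading `deg q_{2k} = 2k+1`), the polynomial
`A f + m(m−1+α/2) f` has (weighted) degree at most `m−1`, i.e. every monomial in its
support has weighted degree `< m`. -/
theorem Aop_triangular (α : ℝ) (m : ℕ) (f : Falg)
    (hf : MvPolynomial.IsWeightedHomogeneous (fun k => 2 * k + 3) f m) :
    ∀ d ∈ (Aop α f + (((m : ℝ) * ((m : ℝ) - 1 + α / 2))) • f).support,
      Finsupp.weight (fun k => 2 * k + 3) d < m := by
  classical
  have hsplit : Aop α f + (((m : ℝ) * ((m : ℝ) - 1 + α / 2))) • f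
      = (∑ a ∈ f.vars, ∑ b ∈ f.vars, (((2 * a + 3) * (2 * b + 3) : ℕ) : ℝ) •
            (MvPolynomial.X (a + b + 1) *
              MvPolynomial.pderiv a (MvPolynomial.pderiv b f)))
        + (∑ i ∈ Finset.range (f.vars.sup id + 1), ∑ j ∈ Finset.range (f.vars.sup id + 1),
            ((2 * (2 * (i : ℝ) + 2 * (j : ℝ) + 3)) : ℝ) •
              (Q i * Q j * MvPolynomial.pderiv (i + j) f)) := by
    rw [Aop]
    simp only [sub_mul, smul_sub, Finset.sum_sub_distrib]
    have hkey := main_identity α m f hf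
    have h2 : (∑ a ∈ f.vars, ∑ b ∈ f.vars, (((2 * a + 3) * (2 * b + 3) : ℕ) : ℝ) •
          ((MvPolynomial.X a * MvPolynomial.X b) *
            MvPolynomial.pderiv a (MvPolynomial.pderiv b f)))
        = ((m : ℝ) * ((m : ℝ) - 1 + α / 2)) • f
          - ∑ a ∈ f.vars, ((2 * (a : ℝ) + 3) * ((2 * (a : ℝ) + 2) + α / 2)) •
              (MvPolynomial.X a * MvPolynomial.pderiv a f) :=
      eq_sub_of_add_eq hkey
    rw [h2]
    abel
  intro d hd
  rw [hsplit] at hd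
  rcases Finset.mem_union.mp (MvPolynomial.support_add hd) with hd1 | hd2
  · -- second-order remainder term
    obtain ⟨a, _, hd1⟩ := Finset.mem_biUnion.mp (MvPolynomial.support_sum hd1)
    obtain ⟨b, _, hd1⟩ := Finset.mem_biUnion.mp (MvPolynomial.support_sum hd1)
    have hd1' : d ∈ (MvPolynomial.X (a + b + 1) *
        MvPolynomial.pderiv a (MvPolynomial.pderiv b f)).support :=
      MvPolynomial.support_smul hd1
    rw [MvPolynomial.support_X_mul] at hd1'
    obtain ⟨e, he, rfl⟩ := Finset.mem_map.mp hd1'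
    have h1 := mem_support_pderiv' he
    have h2 := mem_support_pderiv' h1
    have hw2 : Finsupp.weight (fun k : ℕ => 2 * k + 3)
        (e + Finsupp.single a 1 + Finsupp.single b 1) = m :=
      hf (MvPolynomial.mem_support_iff.mp h2)
    rw [map_add, map_add, weight_single', weight_single', one_mul, one_mul] at hw2
    simp only [addLeftEmbedding_apply, map_add, weight_single', one_mul]
    omega
  · -- the transport part of the generator
    obtain ⟨i, hi, hd2⟩ := Finset.mem_biUnion.mp (MvPolynomial.support_sum hd2)
    obtain ⟨j, hj, hd2⟩ := Finset.mem_biUnion.mp (MvPolynomial.support_sum hd2)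
    have hd2' : d ∈ (Q i * Q j * MvPolynomial.pderiv (i + j) f).support :=
      MvPolynomial.support_smul hd2
    rw [mul_assoc] at hd2'
    obtain ⟨e1, he1, hw1⟩ := support_Q_mul' hd2'
    obtain ⟨e2, he2, hw2⟩ := support_Q_mul' he1
    have hw3 : Finsupp.weight (fun k : ℕ => 2 * k + 3) e2 + (2 * (i + j) + 3) = m :=
      weight_pderiv' hf (i + j) e2 he2
    omega
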